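/- Let m ≥ 1, k ∈ {1,…,m}, let w = (w_1,…,w_m) be positive integers, let w', w'' ≥ 1 with w_k = w' + w'', and set w̄ := (w_1,…,w_{k-1}, w', w'', w_{k+1},…,w_m). For nonzero complex numbers h, q and for a vector v = (v_1,…,v_M) of positive integers with variables R_1,…,R_{M-1}, define e_cosep(v; R) := Σ_{i=1}^{M} (Σ_{j=0}^{v_i−1} (h²q)^j) · (h²q)^{v_{i+1}+⋯+v_M} · ∏_{l=1}^{i-1} (−h)^{v_l+v_{l+1}} R_l. Let Q̄_1,…,Q̄_m be the variables for w̄ and define the substitution ψ*: Q̄_j ↦ Q_j for j ≤ k−2, Q̄_{k-1} ↦ (−h)^{w''} Q_{k-1} (when k ≥ 2), Q̄_k ↦ (−h)^{−w_k}, Q̄_{k+1} ↦ (−h)^{w'} Q_k (when k ≤ m−1), and Q̄_j ↦ Q_{j-1} for j ≥ k+2. Then e_cosep(w̄; ψ*(Q̄)) = e_cosep(w; Q) for all nonzero complex Q_1,…,Q_{m-1}. -/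

import Mathlib

/-- The eigenvalue `e_cosep(v;R)` of the first Macdonald operator in the co-separated case,
for a weight vector `v = (v_1,…,v_M)` (1-indexed) and Kähler variables `R_1,…,R_{M-1}`;
here `ħ = h²` and `−ħ^{1/2} = −h`. -/
noncomputable def eCosep (h q : ℂ) (M : ℕ) (v : ℕ → ℕ) (R : ℕ → ℂ) : ℂ :=
  ∑ i ∈ Finset.Icc 1 M,
    (∑ j ∈ Finset.range (v i), (h ^ 2 * q) ^ j) *
      (h ^ 2 * q) ^ (∑ l ∈ Finset.Icc (i + 1) M, v l) *
      ∏ l ∈ Finset.Icc 1 (i - 1), ((-h) ^ (v l + v (l + 1)) * R l)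

/-- The NS5-resolved weight vector `w̄ = (w_1,…,w_{k-1}, w', w'', w_{k+1},…,w_m)` (1-indexed). -/
def wbar (k w' w'' : ℕ) (w : ℕ → ℕ) : ℕ → ℕ := fun j =>
  if j ≤ k - 1 then w j else if j = k then w' else if j = k + 1 then w'' else w (j - 1)

/-- The Kähler specialization `ψ*` attached to the NS5 resolution of the `k`-th brane:
`Q̄_j ↦ Q_j` for `j ≤ k−2`, `Q̄_{k−1} ↦ (−h)^{w''}Q_{k−1}`, `Q̄_k ↦ (−h)^{−w_k}`,
`Q̄_{k+1} ↦ (−h)^{w'}Q_k`, and `Q̄_j ↦ Q_{j−1}` for `j ≥ k+2`. -/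
noncomputable def psiQ (h : ℂ) (k w' w'' wk : ℕ) (Q : ℕ → ℂ) : ℕ → ℂ := fun j =>
  if j ≤ k - 2 then Q j
  else if j = k - 1 then (-h) ^ w'' * Q (k - 1)
  else if j = k then ((-h) ^ wk)⁻¹
  else if j = k + 1 then (-h) ^ w' * Q k
  else Q (j - 1)

open Finset

private lemma sum_Icc_split' {β : Type*} [AddCommMonoid β] (f : ℕ → β) {a b c : ℕ}
    (h1 : a ≤ b + 1) (h2 : b ≤ c) :
    ∑ i ∈ Icc a c, f i = (∑ i ∈ Icc a b, f i) + ∑ i ∈ Icc (b + 1) c, f i := by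
  have hset : Icc a c = Icc a b ∪ Icc (b + 1) c := by
    ext x; simp only [mem_Icc, mem_union]; omega
  have hdisj : Disjoint (Icc a b) (Icc (b + 1) c) := by
    simp only [Finset.disjoint_left, mem_Icc]
    intro x hx hx'; omega
  rw [hset, Finset.sum_union hdisj]

private lemma prod_Icc_split' {β : Type*} [CommMonoid β] (f : ℕ → β) {a b c : ℕ}
    (h1 : a ≤ b + 1) (h2 : b ≤ c) :
    ∏ i ∈ Icc a c, f i = (∏ i ∈ Icc a b, f i) * ∏ i ∈ Icc (b + 1) c, f i := by
  have hset : Icc a c = Icc a b ∪ Icc (b + 1) c := by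
    ext x; simp only [mem_Icc, mem_union]; omega
  have hdisj : Disjoint (Icc a b) (Icc (b + 1) c) := by
    simp only [Finset.disjoint_left, mem_Icc]
    intro x hx hx'; omega
  rw [hset, Finset.prod_union hdisj]

private lemma prod_Icc_shift' {β : Type*} [CommMonoid β] (f : ℕ → β) (a b : ℕ) :
    ∏ i ∈ Icc (a + 1) (b + 1), f i = ∏ i ∈ Icc a b, f (i + 1) := by
  rw [show Icc (a + 1) (b + 1) = Finset.image (· + 1) (Icc a b) by
    ext x; simp only [mem_Icc, mem_image]; constructor
    · intro hx; exact ⟨x - 1, by omega, by omega⟩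
    · rintro ⟨y, hy, rfl⟩; omega]
  rw [Finset.prod_image (by intro x _ y _ hxy; simp only at hxy; omega)]

private lemma sum_Icc_shift' {β : Type*} [AddCommMonoid β] (f : ℕ → β) (a b : ℕ) :
    ∑ i ∈ Icc (a + 1) (b + 1), f i = ∑ i ∈ Icc a b, f (i + 1) := by
  rw [show Icc (a + 1) (b + 1) = Finset.image (· + 1) (Icc a b) by
    ext x; simp only [mem_Icc, mem_image]; constructor
    · intro hx; exact ⟨x - 1, by omega, by omega⟩
    · rintro ⟨y, hy, rfl⟩; omega]
  rw [Finset.sum_image (by intro x _ y _ hxy; simp only at hxy; omega)]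

/-- The `i`-th summand of `eCosep`. -/
private noncomputable def eTerm (h q : ℂ) (M : ℕ) (v : ℕ → ℕ) (R : ℕ → ℂ) (i : ℕ) : ℂ :=
  (∑ j ∈ Finset.range (v i), (h ^ 2 * q) ^ j) *
    (h ^ 2 * q) ^ (∑ l ∈ Finset.Icc (i + 1) M, v l) *
    ∏ l ∈ Finset.Icc 1 (i - 1), ((-h) ^ (v l + v (l + 1)) * R l)

private lemma eCosep_eq_sum (h q : ℂ) (M : ℕ) (v : ℕ → ℕ) (R : ℕ → ℂ) :
    eCosep h q M v R = ∑ i ∈ Icc 1 M, eTerm h q M v R i := rfl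

/-- `ψ*(e^{X̄}(Q̄)) = e^{X}(Q)` in the co-separated case. -/
theorem eCosep_NS5_resolution (m k : ℕ) (hm : 1 ≤ m) (hk1 : 1 ≤ k) (hk2 : k ≤ m)
    (w : ℕ → ℕ) (hw : ∀ i, 1 ≤ i → i ≤ m → 0 < w i)
    (w' w'' : ℕ) (hw' : 1 ≤ w') (hw'' : 1 ≤ w'') (hsum : w k = w' + w'')
    (h q : ℂ) (hh : h ≠ 0) (hq : q ≠ 0)
    (Q : ℕ → ℂ) (hQ : ∀ j, 1 ≤ j → j ≤ m - 1 → Q j ≠ 0) :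
    eCosep h q (m + 1) (wbar k w' w'' w) (psiQ h k w' w'' (w k) Q) = eCosep h q m w Q := by
  obtain ⟨k, rfl⟩ : ∃ k0, k = k0 + 1 := ⟨k - 1, by omega⟩
  set v := wbar (k + 1) w' w'' w with hvdef
  set R := psiQ h (k + 1) w' w'' (w (k + 1)) Q with hRdef
  have hne : (-h : ℂ) ≠ 0 := neg_ne_zero.mpr hh
  -- values of v
  have hv_lo : ∀ j, j ≤ k → v j = w j := by
    intro j hj; simp only [hvdef, wbar]; rw [if_pos (by omega)]
  have hv_k : v (k + 1) = w' := by
    simp only [hvdef, wbar]; rw [if_neg (by omega)]; simp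
  have hv_k1 : v (k + 2) = w'' := by
    simp only [hvdef, wbar]; rw [if_neg (by omega), if_neg (by omega)]; simp
  have hv_hi : ∀ j, k + 3 ≤ j → v j = w (j - 1) := by
    intro j hj; simp only [hvdef, wbar]
    rw [if_neg (by omega), if_neg (by omega), if_neg (by omega)]
  -- values of R
  have hR_lo : ∀ j, j + 2 ≤ k + 1 → R j = Q j := by
    intro j hj; simp only [hRdef, psiQ]; rw [if_pos (by omega)]
  have hR_km : 1 ≤ k → R k = (-h) ^ w'' * Q k := by
    intro hk
    simp only [hRdef, psiQ]
    rw [if_neg (by omega), if_pos (by omega)]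
    norm_num
  have hR_k : R (k + 1) = ((-h) ^ (w (k + 1)))⁻¹ := by
    simp only [hRdef, psiQ]
    rw [if_neg (by omega), if_neg (by omega)]; simp
  have hR_k1 : R (k + 2) = (-h) ^ w' * Q (k + 1) := by
    simp only [hRdef, psiQ]
    rw [if_neg (by omega), if_neg (by omega), if_neg (by omega)]; simp
  have hR_hi : ∀ j, k + 3 ≤ j → R j = Q (j - 1) := by
    intro j hj; simp only [hRdef, psiQ]
    rw [if_neg (by omega), if_neg (by omega), if_neg (by omega), if_neg (by omega)]
  -- the product factors
  have hT_lo : ∀ l, 1 ≤ l → l ≤ k →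
      (-h) ^ (v l + v (l + 1)) * R l = (-h) ^ (w l + w (l + 1)) * Q l := by
    intro l h1 h2
    rcases eq_or_lt_of_le h2 with hlk | hlk
    · subst hlk
      rw [hv_lo l le_rfl, hv_k, hR_km (by omega), hsum, pow_add, pow_add, pow_add]
      ring
    · rw [hv_lo l (by omega), hv_lo (l + 1) (by omega), hR_lo l (by omega)]
  have hT_k : (-h) ^ (v (k + 1) + v (k + 2)) * R (k + 1) = 1 := by
    rw [hv_k, hv_k1, hR_k, ← hsum, mul_inv_cancel₀ (pow_ne_zero _ hne)]
  have hT_hi : ∀ l, k + 1 ≤ l →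
      (-h) ^ (v (l + 1) + v (l + 1 + 1)) * R (l + 1) = (-h) ^ (w l + w (l + 1)) * Q l := by
    intro l hl
    rcases eq_or_lt_of_le hl with hlk | hlk
    · subst hlk
      rw [hv_k1, show k + 2 + 1 = k + 3 from rfl, hv_hi (k + 3) le_rfl, hR_k1, hsum]
      have : k + 3 - 1 = k + 2 := by omega
      rw [this, pow_add, pow_add, pow_add]
      ring
    · rw [hv_hi (l + 1) (by omega), hv_hi (l + 1 + 1) (by omega), hR_hi (l + 1) (by omega)]
      have e1 : l + 1 - 1 = l := by omega
      have e2 : l + 1 + 1 - 1 = l + 1 := by omega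
      rw [e1, e2]
  -- sums of v
  have hS_hi : ∀ i, k + 1 ≤ i → ∑ l ∈ Icc (i + 2) (m + 1), v l = ∑ l ∈ Icc (i + 1) m, w l := by
    intro i hi
    rw [show i + 2 = i + 1 + 1 from rfl, sum_Icc_shift']
    refine Finset.sum_congr rfl fun l hl => ?_
    simp only [mem_Icc] at hl
    rw [hv_hi (l + 1) (by omega)]
    simp
  have hS_k : ∑ l ∈ Icc (k + 2) (m + 1), v l = w'' + ∑ l ∈ Icc (k + 2) m, w l := by
    rw [sum_Icc_split' (fun l => v l) (show k + 2 ≤ k + 2 + 1 by omega) (show k + 2 ≤ m + 1 by omega),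
      Finset.Icc_self, Finset.sum_singleton, hv_k1,
      show k + 2 + 1 = k + 1 + 2 from rfl, hS_hi (k + 1) (by omega)]
  have hS_lo : ∀ i, i ≤ k → ∑ l ∈ Icc (i + 1) (m + 1), v l = ∑ l ∈ Icc (i + 1) m, w l := by
    intro i hi
    rw [sum_Icc_split' (fun l => v l) (show i + 1 ≤ k + 1 by omega) (show k ≤ m + 1 by omega),
      sum_Icc_split' (fun l => v l) (show k + 1 ≤ k + 1 + 1 by omega) (show k + 1 ≤ m + 1 by omega),
      Finset.Icc_self, Finset.sum_singleton, hv_k,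
      sum_Icc_split' (fun l => w l) (show i + 1 ≤ k + 1 by omega) (show k ≤ m by omega),
      sum_Icc_split' (fun l => w l) (show k + 1 ≤ k + 1 + 1 by omega) (show k + 1 ≤ m by omega),
      Finset.Icc_self, Finset.sum_singleton, hsum,
      Finset.sum_congr rfl fun l hl => hv_lo l (by simp only [mem_Icc] at hl; omega),
      hS_k]
    ring
  -- products
  have hP_lo : ∀ n, n ≤ k →
      ∏ l ∈ Icc 1 n, ((-h) ^ (v l + v (l + 1)) * R l)
        = ∏ l ∈ Icc 1 n, ((-h) ^ (w l + w (l + 1)) * Q l) := by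
    intro n hn
    refine Finset.prod_congr rfl fun l hl => ?_
    simp only [mem_Icc] at hl
    exact hT_lo l hl.1 (by omega)
  have hP_mid : ∏ l ∈ Icc 1 (k + 1), ((-h) ^ (v l + v (l + 1)) * R l)
      = ∏ l ∈ Icc 1 k, ((-h) ^ (w l + w (l + 1)) * Q l) := by
    rw [prod_Icc_split' _ (show (1:ℕ) ≤ k + 1 by omega) (show k ≤ k + 1 by omega),
      Finset.Icc_self, Finset.prod_singleton, hT_k, mul_one, hP_lo k le_rfl]
  have hP_hi : ∀ i, k + 2 ≤ i →
      ∏ l ∈ Icc 1 i, ((-h) ^ (v l + v (l + 1)) * R l)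
        = ∏ l ∈ Icc 1 (i - 1), ((-h) ^ (w l + w (l + 1)) * Q l) := by
    intro i hi
    obtain ⟨i, rfl⟩ : ∃ i0, i = i0 + 1 := ⟨i - 1, by omega⟩
    rw [prod_Icc_split' _ (show (1:ℕ) ≤ k + 1 + 1 by omega) (show k + 1 ≤ i + 1 by omega),
      hP_mid, show k + 1 + 1 = k + 1 + 1 from rfl, prod_Icc_shift' _ (k + 1) i,
      Finset.prod_congr rfl fun l hl => hT_hi l (by simp only [mem_Icc] at hl; omega),
      prod_Icc_split' (fun l => (-h) ^ (w l + w (l + 1)) * Q l)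
        (show (1:ℕ) ≤ k + 1 by omega) (show k ≤ i + 1 - 1 by omega)]
    simp
  -- geometric sum identity
  have hg : (∑ j ∈ range w', (h ^ 2 * q) ^ j) * (h ^ 2 * q) ^ w''
      + (∑ j ∈ range w'', (h ^ 2 * q) ^ j) = ∑ j ∈ range (w (k + 1)), (h ^ 2 * q) ^ j := by
    rw [hsum, add_comm w' w'', Finset.sum_range_add (fun j => (h ^ 2 * q) ^ j) w'' w',
      Finset.sum_congr rfl fun i _ => pow_add (h ^ 2 * q) w'' i, ← Finset.mul_sum]
    ring
  -- main assembly
  rw [eCosep_eq_sum, eCosep_eq_sum,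
    sum_Icc_split' (eTerm h q (m + 1) v R) (show (1:ℕ) ≤ k + 1 by omega)
      (show k ≤ m + 1 by omega),
    sum_Icc_split' (eTerm h q (m + 1) v R) (show k + 1 ≤ k + 1 + 1 by omega)
      (show k + 1 ≤ m + 1 by omega),
    Finset.Icc_self, Finset.sum_singleton,
    sum_Icc_split' (eTerm h q (m + 1) v R) (show k + 1 + 1 ≤ k + 2 + 1 by omega)
      (show k + 2 ≤ m + 1 by omega),
    Finset.Icc_self, Finset.sum_singleton,
    sum_Icc_split' (eTerm h q m w Q) (show (1:ℕ) ≤ k + 1 by omega) (show k ≤ m by omega),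
    sum_Icc_split' (eTerm h q m w Q) (show k + 1 ≤ k + 1 + 1 by omega)
      (show k + 1 ≤ m by omega),
    Finset.Icc_self, Finset.sum_singleton]
  have e1 : ∑ i ∈ Icc 1 k, eTerm h q (m + 1) v R i = ∑ i ∈ Icc 1 k, eTerm h q m w Q i := by
    refine Finset.sum_congr rfl fun i hi => ?_
    simp only [mem_Icc] at hi
    unfold eTerm
    rw [hv_lo i hi.2, hS_lo i hi.2, hP_lo (i - 1) (by omega)]
  have e2 : eTerm h q (m + 1) v R (k + 1) + eTerm h q (m + 1) v R (k + 2)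
      = eTerm h q m w Q (k + 1) := by
    unfold eTerm
    rw [hv_k, hv_k1, show k + 1 + 1 = k + 2 from rfl, hS_k,
      show k + 2 + 1 = k + 1 + 2 from rfl, hS_hi (k + 1) le_rfl,
      show k + 1 - 1 = k from by omega, show k + 2 - 1 = k + 1 from by omega,
      hP_lo k le_rfl, hP_mid, pow_add, ← hg]
    ring
  have e3 : ∑ i ∈ Icc (k + 2 + 1) (m + 1), eTerm h q (m + 1) v R i
      = ∑ i ∈ Icc (k + 1 + 1) m, eTerm h q m w Q i := by
    rw [sum_Icc_shift' _ (k + 2) m]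
    refine Finset.sum_congr rfl fun i hi => ?_
    simp only [mem_Icc] at hi
    unfold eTerm
    rw [hv_hi (i + 1) (by omega), show i + 1 - 1 = i from rfl,
      show i + 1 + 1 = i + 2 from rfl, hS_hi i (by omega), hP_hi i (by omega)]
  rw [e1, e3]
  linear_combination e2
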